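/- The Desargues graph admits a coherent 6-cycle orientation of level 3; that is, one can choose, for each of the twenty 6-cycles of the Desargues graph, one of its two directions so that every path v_0, v_1, v_2 on 3 distinct vertices with consecutive vertices adjacent occurs as a consecutive segment of exactly one chosen directed 6-cycle. -/

import Mathlib

/-- A directed `g`-cycle of a simple graph `G`: an injective map `c : ZMod g → V`
with `c i` adjacent to `c (i+1)` for all `i`. -/
def IsDirCycleOn {V : Type*} (G : SimpleGraph V) (g : ℕ) (c : ZMod g → V) : Prop :=
  Function.Injective c ∧ ∀ i : ZMod g, G.Adj (c i) (c (i + 1))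

/-- A sequence of `k` distinct vertices with consecutive vertices adjacent. -/
def IsPathSeq {V : Type*} (G : SimpleGraph V) (k : ℕ) (v : Fin k → V) : Prop :=
  Function.Injective v ∧ ∀ (j : ℕ) (h : j + 1 < k),
    G.Adj (v ⟨j, Nat.lt_of_succ_lt h⟩) (v ⟨j + 1, h⟩)

/-- A coherent `g`-cycle orientation of level `k` of `G`: a set `D` of directed
`g`-cycles of `G` containing, for every `g`-cycle of `G`, exactly one of its two
directions (one representative up to rotation), and such that every sequence of `k`
distinct vertices `v 0, …, v (k-1)` with consecutive vertices adjacent occurs as a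
consecutive segment `(c i, c (i+1), …, c (i+k-1))` of exactly one `c ∈ D`. -/
def IsCoherentOrientation {V : Type*} (G : SimpleGraph V) (g k : ℕ)
    (D : Set (ZMod g → V)) : Prop :=
  (∀ c ∈ D, IsDirCycleOn G g c) ∧
  (∀ c : ZMod g → V, IsDirCycleOn G g c →
    ∃! c', c' ∈ D ∧
      ((∃ r : ZMod g, ∀ i, c' i = c (i + r)) ∨ (∃ r : ZMod g, ∀ i, c' i = c (r - i)))) ∧
  (∀ v : Fin k → V, IsPathSeq G k v →
    ∃! c, c ∈ D ∧ ∃ i : ZMod g, ∀ j : Fin k, c (i + ((j : ℕ) : ZMod g)) = v j)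

/-- The Desargues graph: vertex set `ZMod 20`, `i` adjacent to `i+1`, together with
the extra edges `{4x+3, 4x+8}` and `{4x+1, 4x+10}` for every `x`. -/
def desarguesGraph : SimpleGraph (ZMod 20) :=
  SimpleGraph.fromRel (fun i j =>
    j = i + 1 ∨ ∃ x : ZMod 20,
      (i = 4 * x + 3 ∧ j = 4 * x + 8) ∨ (i = 4 * x + 1 ∧ j = 4 * x + 10))

instance : DecidableRel desarguesGraph.Adj := fun a b =>
  decidable_of_iff _ ((SimpleGraph.fromRel_adj (fun i j =>
    j = i + 1 ∨ ∃ x : ZMod 20,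
      (i = 4 * x + 3 ∧ j = 4 * x + 8) ∨ (i = 4 * x + 1 ∧ j = 4 * x + 10)) a b).symm)

/-- Adjacency lists of the Desargues graph. -/
def nbr : ZMod 20 → List (ZMod 20) :=
  ![[1,15,19],[0,2,10],[1,3,13],[2,4,8],[3,5,19],[4,6,14],[5,7,17],[6,8,12],[3,7,9],[8,10,18],
    [1,9,11],[10,12,16],[7,11,13],[2,12,14],[5,13,15],[0,14,16],[11,15,17],[6,16,18],[9,17,19],[0,4,18]]

theorem adj_iff : ∀ a b : ZMod 20, desarguesGraph.Adj a b ↔ b ∈ nbr a := by decide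

/-- The chosen directed hexagons. -/
def L : List (ZMod 6 → ZMod 20) :=
  [![0,1,2,3,4,19], ![0,15,14,13,2,1], ![0,19,18,9,10,1], ![0,1,10,11,16,15],
   ![0,19,4,5,14,15], ![0,15,16,17,18,19], ![1,10,9,8,3,2], ![1,2,13,12,11,10],
   ![2,13,14,5,4,3], ![2,3,8,7,12,13], ![3,4,5,6,7,8], ![3,8,9,18,19,4],
   ![4,19,18,17,6,5], ![5,14,13,12,7,6], ![5,6,17,16,15,14], ![6,17,18,9,8,7],
   ![6,7,12,11,16,17], ![7,8,9,10,11,12], ![9,18,17,16,11,10], ![11,12,13,14,15,16]]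

theorem factCyc : ∀ k : Fin L.length, Function.Injective (L.get k) ∧
    ∀ i : ZMod 6, desarguesGraph.Adj (L.get k i) (L.get k (i + 1)) := by decide

theorem fact3a : ∀ a : ZMod 20, ∀ b, b ∈ nbr a → ∀ d, d ∈ nbr b → a ≠ d →
    ∃ k : Fin L.length, ∃ i : ZMod 6,
      L.get k i = a ∧ L.get k (i+1) = b ∧ L.get k (i+2) = d := by decide

theorem fact3b : ∀ k k' : Fin L.length, ∀ i i' : ZMod 6,
    L.get k i = L.get k' i' → L.get k (i+1) = L.get k' (i'+1) →
    L.get k (i+2) = L.get k' (i'+2) → L.get k = L.get k' := by decide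

theorem factLrefl : ∀ k k' : Fin L.length, ∀ r : ZMod 6,
    ¬ (∀ j : ZMod 6, L.get k j = L.get k' (r - j)) := by decide

set_option maxRecDepth 8000 in
set_option synthInstance.maxSize 5000 in
set_option synthInstance.maxHeartbeats 2000000 in
set_option maxHeartbeats 4000000 in
theorem fact4 : ∀ a : ZMod 20, ∀ b, b ∈ nbr a → ∀ d, d ∈ nbr b → ∀ e, e ∈ nbr d →
    a ≠ d → b ≠ e → a ≠ e →
    ∃ k : Fin L.length, ∃ i : ZMod 6,
      (L.get k i = a ∧ L.get k (i+1) = b ∧ L.get k (i+2) = d ∧ L.get k (i+3) = e) ∨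
      (L.get k i = e ∧ L.get k (i+1) = d ∧ L.get k (i+2) = b ∧ L.get k (i+3) = a) := by decide

set_option maxRecDepth 8000 in
set_option synthInstance.maxSize 5000 in
set_option synthInstance.maxHeartbeats 2000000 in
set_option maxHeartbeats 4000000 in
theorem fact5 : ∀ a : ZMod 20, ∀ b, b ∈ nbr a → ∀ d, d ∈ nbr b → a ≠ d →
    ∀ e, e ∈ nbr d → a ≠ e → b ≠ e →
    ∀ x, x ∈ nbr e → a ≠ x → b ≠ x → d ≠ x →
    ∀ y, y ∈ nbr x → b ≠ y → d ≠ y → e ≠ y → a ∈ nbr y →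
    ∀ x', x' ∈ nbr e → a ≠ x' → b ≠ x' → d ≠ x' →
    ∀ y', y' ∈ nbr x' → b ≠ y' → d ≠ y' → e ≠ y' → a ∈ nbr y' →
    x = x' ∧ y = y' := by decide

/-- A directed 6-cycle is determined by 4 consecutive vertices. -/
theorem keyExt (u w : ZMod 6 → ZMod 20)
    (hui : Function.Injective u) (hua : ∀ i, desarguesGraph.Adj (u i) (u (i+1)))
    (hwi : Function.Injective w) (hwa : ∀ i, desarguesGraph.Adj (w i) (w (i+1)))
    (h0 : u 0 = w 0) (h1 : u 1 = w 1) (h2 : u 2 = w 2) (h3 : u 3 = w 3) :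
    ∀ j, u j = w j := by
  have n01 : u 1 ∈ nbr (u 0) := (adj_iff _ _).mp (hua 0)
  have n12 : u 2 ∈ nbr (u 1) := (adj_iff _ _).mp (hua 1)
  have n23 : u 3 ∈ nbr (u 2) := (adj_iff _ _).mp (hua 2)
  have n34 : u 4 ∈ nbr (u 3) := (adj_iff _ _).mp (hua 3)
  have n45 : u 5 ∈ nbr (u 4) := (adj_iff _ _).mp (hua 4)
  have n50 : u 0 ∈ nbr (u 5) := (adj_iff _ _).mp (hua 5)
  have m34 : w 4 ∈ nbr (u 3) := by rw [h3]; exact (adj_iff _ _).mp (hwa 3)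
  have m45 : w 5 ∈ nbr (w 4) := (adj_iff _ _).mp (hwa 4)
  have m50 : u 0 ∈ nbr (w 5) := by rw [h0]; exact (adj_iff _ _).mp (hwa 5)
  obtain ⟨e4, e5⟩ := fact5 (u 0) (u 1) n01 (u 2) n12 (hui.ne (by decide))
    (u 3) n23 (hui.ne (by decide)) (hui.ne (by decide))
    (u 4) n34 (hui.ne (by decide)) (hui.ne (by decide)) (hui.ne (by decide))
    (u 5) n45 (hui.ne (by decide)) (hui.ne (by decide)) (hui.ne (by decide)) n50
    (w 4) m34 (by rw [h0]; exact hwi.ne (by decide)) (by rw [h1]; exact hwi.ne (by decide))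
      (by rw [h2]; exact hwi.ne (by decide))
    (w 5) m45 (by rw [h1]; exact hwi.ne (by decide)) (by rw [h2]; exact hwi.ne (by decide))
      (by rw [h3]; exact hwi.ne (by decide)) m50
  intro j
  have hj : j = 0 ∨ j = 1 ∨ j = 2 ∨ j = 3 ∨ j = 4 ∨ j = 5 := by revert j; decide
  rcases hj with rfl | rfl | rfl | rfl | rfl | rfl <;> assumption

/-- The Desargues graph admits a coherent 6-cycle orientation of level 3. -/
theorem desargues_coherent_orientation :
    ∃ D : Set (ZMod 6 → ZMod 20), IsCoherentOrientation desarguesGraph 6 3 D := by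
  refine ⟨{c | c ∈ L}, ?_, ?_, ?_⟩
  · -- every element of D is a directed 6-cycle
    intro c hcD
    obtain ⟨k, hk⟩ := List.mem_iff_get.mp hcD
    exact hk ▸ ⟨(factCyc k).1, (factCyc k).2⟩
  · -- every directed 6-cycle has a unique representative in D
    rintro c ⟨hinj, hadj⟩
    obtain ⟨k, i, hm⟩ := fact4 (c 0) (c 1) ((adj_iff _ _).mp (hadj 0))
      (c 2) ((adj_iff _ _).mp (hadj 1)) (c 3) ((adj_iff _ _).mp (hadj 2))
      (hinj.ne (by decide)) (hinj.ne (by decide)) (hinj.ne (by decide))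
    have hcyc := factCyc k
    have hwinj : Function.Injective (fun j : ZMod 6 => L.get k (i + j)) :=
      fun x y h => add_left_cancel (hcyc.1 h)
    have hwadj : ∀ j : ZMod 6,
        desarguesGraph.Adj (L.get k (i + j)) (L.get k (i + (j+1))) := fun j => by
      have h := hcyc.2 (i + j); rwa [add_assoc] at h
    rcases hm with ⟨m0, m1, m2, m3⟩ | ⟨m0, m1, m2, m3⟩
    · -- forward match
      have hall : ∀ j, c j = L.get k (i + j) := by
        refine keyExt c (fun j => L.get k (i + j)) hinj hadj hwinj hwadj ?_ ?_ ?_ ?_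
        · show c 0 = L.get k (i + 0); rw [add_zero]; exact m0.symm
        · exact m1.symm
        · exact m2.symm
        · exact m3.symm
      refine ⟨L.get k, ⟨List.get_mem _ _, Or.inl ⟨-i, fun m => ?_⟩⟩, ?_⟩
      · rw [hall (m + -i)]; congr 1; ring
      · rintro y ⟨hyL, hyrel⟩
        obtain ⟨k', hk'⟩ := List.mem_iff_get.mp hyL
        rcases hyrel with ⟨r, hr⟩ | ⟨r, hr⟩
        · have e0 : L.get k' 0 = L.get k (i + r) := by
            rw [hk', hr 0, hall]; congr 1; ring
          have e1 : L.get k' (0+1) = L.get k ((i + r)+1) := by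
            rw [hk', hr (0+1), hall]; congr 1; ring
          have e2 : L.get k' (0+2) = L.get k ((i + r)+2) := by
            rw [hk', hr (0+2), hall]; congr 1; ring
          rw [← hk', fact3b k' k 0 (i + r) e0 e1 e2]
        · exact absurd (fun j => by rw [hk', hr j, hall]; congr 1; ring)
            (factLrefl k' k (i + r))
    · -- reversed match
      have huinj : Function.Injective (fun j : ZMod 6 => c (3 - j)) :=
        fun x y h => sub_right_injective (hinj h)
      have huadj : ∀ j : ZMod 6,
          desarguesGraph.Adj (c (3 - j)) (c (3 - (j+1))) := fun j => by
        have h := hadj (2 - j)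
        rw [show (2 : ZMod 6) - j + 1 = 3 - j by ring] at h
        rw [show (3 : ZMod 6) - (j + 1) = 2 - j by ring]
        exact h.symm
      have hall : ∀ j, c (3 - j) = L.get k (i + j) := by
        refine keyExt (fun j => c (3 - j)) (fun j => L.get k (i + j))
          huinj huadj hwinj hwadj ?_ ?_ ?_ ?_
        · show c (3 - 0) = L.get k (i + 0); rw [sub_zero, add_zero]; exact m0.symm
        · show c (3 - 1) = L.get k (i + 1); exact m1.symm
        · show c (3 - 2) = L.get k (i + 2); exact m2.symm
        · show c (3 - 3) = L.get k (i + 3); exact m3.symm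
      have hc' : ∀ m, c m = L.get k (i + (3 - m)) := fun m => by
        have h := hall (3 - m); rwa [show (3 : ZMod 6) - (3 - m) = m by ring] at h
      refine ⟨L.get k, ⟨List.get_mem _ _, Or.inr ⟨3 + i, fun m => ?_⟩⟩, ?_⟩
      · rw [hc' (3 + i - m)]; congr 1; ring
      · rintro y ⟨hyL, hyrel⟩
        obtain ⟨k', hk'⟩ := List.mem_iff_get.mp hyL
        rcases hyrel with ⟨r, hr⟩ | ⟨r, hr⟩
        · exact absurd (fun j => by rw [hk', hr j, hc']; congr 1; ring)
            (factLrefl k' k (i + 3 - r))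
        · have e0 : L.get k' 0 = L.get k (i + 3 - r) := by
            rw [hk', hr 0, hc']; congr 1; ring
          have e1 : L.get k' (0+1) = L.get k ((i + 3 - r)+1) := by
            rw [hk', hr (0+1), hc']; congr 1; ring
          have e2 : L.get k' (0+2) = L.get k ((i + 3 - r)+2) := by
            rw [hk', hr (0+2), hc']; congr 1; ring
          rw [← hk', fact3b k' k 0 (i + 3 - r) e0 e1 e2]
  · -- every 2-path is a segment of a unique element of D
    rintro v ⟨hvinj, hvadj⟩
    have a01 : desarguesGraph.Adj (v 0) (v 1) := hvadj 0 (by norm_num)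
    have a12 : desarguesGraph.Adj (v 1) (v 2) := hvadj 1 (by norm_num)
    obtain ⟨k, i, h0, h1, h2⟩ := fact3a (v 0) (v 1) ((adj_iff _ _).mp a01)
      (v 2) ((adj_iff _ _).mp a12) (hvinj.ne (by decide))
    refine ⟨L.get k, ⟨List.get_mem _ _, i, ?_⟩, ?_⟩
    · intro j
      have hj : j = 0 ∨ j = 1 ∨ j = 2 := by revert j; decide
      rcases hj with rfl | rfl | rfl
      · simpa using h0
      · simpa using h1
      · simpa using h2
    · rintro y ⟨hyL, i', hy⟩
      obtain ⟨k', hk'⟩ := List.mem_iff_get.mp hyL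
      have hy0 : y i' = v 0 := by simpa using hy 0
      have hy1 : y (i'+1) = v 1 := by simpa using hy 1
      have hy2 : y (i'+2) = v 2 := by simpa using hy 2
      rw [← hk', fact3b k' k i' i (by rw [hk', hy0, h0]) (by rw [hk', hy1, h1])
        (by rw [hk', hy2, h2])]
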